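/- Let I be a convergence ideal on a Boolean algebra B. The sequential topology induced by I (a set A is closed iff it contains all I-limits of sequences from A) is Fréchet (the closure of each set equals the set of limits of its sequences) if and only if I has the diagonal property: whenever lim_n x^k_n = 0 for all k, there exists F : ℕ → ℕ such that lim_k x^k_{F(k)} = 0. -/
import Mathlib


open Filter Topology

variable {α : Type*}

/-- A convergence ideal on a Boolean algebra: a set of infinite sequences
(i) with no nonzero common lower bound, (ii) closed under subsequences,
(iii) closed under minorization, (iv) closed under pairwise joins, and
(v) containing every infinite antichain (sequence of pairwise disjoint nonzero elements). -/
def IsConvIdeal [BooleanAlgebra α] (I : Set (ℕ → α)) : Prop :=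
  (∀ a ∈ I, ∀ b : α, (∀ n, b ≤ a n) → b = ⊥) ∧
  (∀ a ∈ I, ∀ φ : ℕ → ℕ, StrictMono φ → (fun n => a (φ n)) ∈ I) ∧
  (∀ a ∈ I, ∀ b : ℕ → α, (∀ n, b n ≤ a n) → b ∈ I) ∧
  (∀ a ∈ I, ∀ b ∈ I, (fun n => a n ⊔ b n) ∈ I) ∧
  (∀ a : ℕ → α, (∀ n, a n ≠ ⊥) → (∀ i j, i ≠ j → a i ⊓ a j = ⊥) → a ∈ I)

/-- `ConvTo I a c` : the sequence `a` converges to `c`, i.e. `{a n ∆ c} ∈ I`. -/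
def ConvTo [BooleanAlgebra α] (I : Set (ℕ → α)) (a : ℕ → α) (c : α) : Prop :=
  (fun n => symmDiff (a n) c) ∈ I

/-- A set is sequentially closed if it contains all `I`-limits of its sequences. -/
def SeqClosed [BooleanAlgebra α] (I : Set (ℕ → α)) (A : Set α) : Prop :=
  ∀ x : ℕ → α, (∀ n, x n ∈ A) → ∀ c : α, ConvTo I x c → c ∈ A

/-- The set of `I`-limits of sequences from `A`. -/
def seqLim [BooleanAlgebra α] (I : Set (ℕ → α)) (A : Set α) : Set α :=
  {c | ∃ x : ℕ → α, (∀ n, x n ∈ A) ∧ ConvTo I x c}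

/-- Closure of `A` in the sequential topology: the least sequentially closed superset. -/
def seqTopClosure [BooleanAlgebra α] (I : Set (ℕ → α)) (A : Set α) : Set α :=
  ⋂₀ {B : Set α | A ⊆ B ∧ SeqClosed I B}

theorem exists_strictMono_sel (P : ℕ → Prop) (h : ∀ M, ∃ m, M < m ∧ P m) :
    ∃ φ : ℕ → ℕ, StrictMono φ ∧ ∀ i, P (φ i) := by
  let f : ℕ → ℕ := fun i => Nat.rec (h 0).choose (fun _ prev => (h prev).choose) i
  refine ⟨f, strictMono_nat_of_lt_succ fun n => (h (f n)).choose_spec.1, fun i => ?_⟩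
  cases i with
  | zero => exact (h 0).choose_spec.2
  | succ n => exact (h (f n)).choose_spec.2

theorem exists_antichain {α : Type*} [BooleanAlgebra α] (hnt : (⊥ : α) ≠ ⊤)
    (hatomless : ∀ a : α, a ≠ ⊥ → ∃ b, b ≠ ⊥ ∧ b < a) :
    ∃ a : ℕ → α, (∀ k, a k ≠ ⊥) ∧ (∀ i j, i ≠ j → a i ⊓ a j = ⊥) := by
  classical
  set b' : α → α := fun c => if h : c ≠ ⊥ then (hatomless c h).choose else ⊥ with hb'
  have hb1 : ∀ c : α, c ≠ ⊥ → b' c ≠ ⊥ := by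
    intro c h; simp only [b', dif_pos h]; exact (hatomless c h).choose_spec.1
  have hb2 : ∀ c : α, c ≠ ⊥ → b' c < c := by
    intro c h; simp only [b', dif_pos h]; exact (hatomless c h).choose_spec.2
  let c : ℕ → α := fun k => Nat.rec ⊤ (fun _ ck => ck \ b' ck) k
  have hcs : ∀ k, c (k + 1) = c k \ b' (c k) := fun k => rfl
  have hc0 : ∀ k, c k ≠ ⊥ := by
    intro k; induction k with
    | zero => exact hnt.symm
    | succ k ih =>
      rw [hcs, Ne, sdiff_eq_bot_iff]
      intro hle
      exact absurd ((hb2 _ ih).trans_le hle) (lt_irrefl _)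
  have hmono : Antitone c := antitone_nat_of_succ_le fun n => by rw [hcs]; exact sdiff_le
  refine ⟨fun k => b' (c k), fun k => hb1 _ (hc0 k), ?_⟩
  have key : ∀ i j, i < j → b' (c i) ⊓ b' (c j) = ⊥ := by
    intro i j hij
    have h1 : b' (c j) ≤ (b' (c i))ᶜ := by
      calc b' (c j) ≤ c j := (hb2 _ (hc0 j)).le
        _ ≤ c (i + 1) := hmono hij
        _ = c i ⊓ (b' (c i))ᶜ := by rw [hcs, sdiff_eq]
        _ ≤ (b' (c i))ᶜ := inf_le_right
    have : b' (c i) ⊓ b' (c j) ≤ ⊥ := by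
      calc b' (c i) ⊓ b' (c j) ≤ b' (c i) ⊓ (b' (c i))ᶜ := inf_le_inf_left _ h1
        _ = ⊥ := inf_compl_eq_bot
    exact le_bot_iff.mp this
  intro i j hij
  rcases hij.lt_or_gt with h | h
  · exact key i j h
  · rw [inf_comm]; exact key j i h

theorem stmt7 [BooleanAlgebra α] (hnt : (⊥ : α) ≠ ⊤) (hatomless : ∀ a : α, a ≠ ⊥ → ∃ b, b ≠ ⊥ ∧ b < a)
    (I : Set (ℕ → α)) (hI : IsConvIdeal I) :
    (∀ A : Set α, seqTopClosure I A = seqLim I A) ↔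
    (∀ x : ℕ → ℕ → α, (∀ k, x k ∈ I) → ∃ F : ℕ → ℕ, (fun k => x k (F k)) ∈ I) := by
  obtain ⟨hLB, hSub, hMin, hJoin, hAnti⟩ := hI
  obtain ⟨a, ha0, hadisj⟩ := exists_antichain hnt hatomless
  have haI : a ∈ I := hAnti a ha0 hadisj
  have hbotI : (fun _ : ℕ => (⊥ : α)) ∈ I := hMin a haI _ fun n => bot_le
  constructor
  · intro hF x hx
    set X : ℕ → ℕ → α := fun k n => (Finset.range (k + 1)).sup (fun j => x j n) with hX
    have hXI : ∀ k, X k ∈ I := by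
      intro k
      induction k with
      | zero => refine hMin (x 0) (hx 0) _ fun n => ?_; simp [X]
      | succ k ih =>
        refine hMin _ (hJoin _ ih _ (hx (k + 1))) _ fun n => ?_
        simp only [X, Finset.range_add_one, Finset.sup_insert]
        exact le_of_eq (sup_comm _ _)
    have hxX : ∀ j k n, j ≤ k → x j n ≤ X k n := fun j k n hjk =>
      Finset.le_sup (f := fun j => x j n) (Finset.mem_range.mpr (Nat.lt_succ_of_le hjk))
    set A : Set α := {d | ∃ k n, d = a k ⊔ X k n} with hA
    have haA : ∀ k, a k ∈ seqLim I A := by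
      intro k
      refine ⟨fun n => a k ⊔ X k n, fun n => ⟨k, n, rfl⟩, hMin _ (hXI k) _ fun n => ?_⟩
      rw [symmDiff_eq_sup_sdiff_inf]
      simp [sdiff_le_iff]
    have hclosed : SeqClosed I (seqTopClosure I A) := by
      intro s hs c hc
      rw [seqTopClosure, Set.mem_sInter]
      intro B hB
      exact hB.2 s (fun n => (hs n) B hB) c hc
    have hbotA : (⊥ : α) ∈ seqLim I A := by
      rw [← hF A]
      refine hclosed a (fun k => ?_) ⊥ ?_
      · rw [hF A]; exact haA k
      · show (fun k => symmDiff (a k) ⊥) ∈ I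
        simpa using haI
    obtain ⟨y, hyA, hy⟩ := hbotA
    have hyI : y ∈ I := by
      have : (fun m => symmDiff (y m) ⊥) ∈ I := hy
      simpa using this
    choose K N hKN using hyA
    have hbig : ∀ Nb M : ℕ, ∃ m, M < m ∧ Nb < K m := by
      by_contra hcon
      push_neg at hcon
      obtain ⟨Nb, M, hM⟩ := hcon
      have hfib : ∃ k', ∀ M', ∃ m, M' < m ∧ K m = k' := by
        by_contra h2
        push_neg at h2
        choose g hg using h2
        set M'' := max M ((Finset.range (Nb + 1)).sup g) with hM''
        have hm1 : M < M'' + 1 := Nat.lt_succ_of_le (le_max_left _ _)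
        have hKle : K (M'' + 1) ≤ Nb := hM _ hm1
        have hm2 : g (K (M'' + 1)) < M'' + 1 := by
          refine Nat.lt_succ_of_le (le_trans ?_ (le_max_right _ _))
          exact Finset.le_sup (Finset.mem_range.mpr (Nat.lt_succ_of_le hKle))
        exact hg _ _ hm2 rfl
      obtain ⟨k', hk'⟩ := hfib
      obtain ⟨φ, hφ, hφk⟩ := exists_strictMono_sel (fun m => K m = k') hk'
      have hbot : a k' = ⊥ := by
        refine hLB _ (hSub y hyI φ hφ) _ fun i => ?_
        have h1 := hKN (φ i)
        rw [h1, hφk i]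
        exact le_sup_left
      exact ha0 k' hbot
    let ms : ℕ → ℕ := fun i => Nat.rec (hbig 0 0).choose (fun _ prev => (hbig (K prev) prev).choose) i
    have hms : StrictMono ms := strictMono_nat_of_lt_succ fun n => (hbig (K (ms n)) (ms n)).choose_spec.1
    have hKms : StrictMono fun i => K (ms i) :=
      strictMono_nat_of_lt_succ fun n => (hbig (K (ms n)) (ms n)).choose_spec.2
    have hle : ∀ i, i ≤ K (ms i) := fun i => hKms.le_apply
    refine ⟨fun j => N (ms j), hMin _ (hSub y hyI ms hms) _ fun j => ?_⟩
    calc x j (N (ms j)) ≤ X (K (ms j)) (N (ms j)) := hxX j _ _ (hle j)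
      _ ≤ y (ms j) := by rw [hKN (ms j)]; exact le_sup_right
  · intro hdiag A
    have hsubA : A ⊆ seqLim I A := by
      intro c hc
      refine ⟨fun _ => c, fun _ => hc, ?_⟩
      show (fun _ => symmDiff c c) ∈ I
      simpa using hbotI
    have hseqclosed : SeqClosed I (seqLim I A) := by
      intro cs hcs c hc
      choose xs hxs hconv using hcs
      obtain ⟨F, hFI⟩ := hdiag (fun k n => symmDiff (xs k n) (cs k)) hconv
      refine ⟨fun k => xs k (F k), fun k => hxs k (F k), ?_⟩
      exact hMin _ (hJoin _ hFI _ hc) _ fun k => symmDiff_triangle _ _ _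
    apply subset_antisymm
    · intro c hc
      exact hc (seqLim I A) ⟨hsubA, hseqclosed⟩
    · intro c hc
      rw [seqTopClosure, Set.mem_sInter]
      intro B hB
      obtain ⟨xx, hxx, hconv⟩ := hc
      exact hB.2 xx (fun n => hB.1 (hxx n)) c hconv
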